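/- Let T ∈ 𝒫₁(ℓ_2). If T is a point of continuity of the identity map from (𝒫₁(ℓ_2), SOT) to (𝒫₁(ℓ_2), SOT*), then T* e_l ≠ 0 for every l ≥ 0, where T* is the Hilbert-space adjoint of T. -/

import Mathlib

open scoped ENNReal

noncomputable section

/-- The Hilbert space `ℓ₂` of square-summable complex sequences. -/
abbrev L2 := lp (fun _ : ℕ => ℂ) 2

/-- A vector of `ℓ₂` is positive if all its coordinates are nonnegative reals. -/
def PosVec (x : L2) : Prop := ∀ n : ℕ, 0 ≤ (x n).re ∧ (x n).im = 0

/-- The set `𝒫₁(ℓ₂)` of positive contractions on `ℓ₂`. -/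
def P1 : Set (L2 →L[ℂ] L2) :=
  {T | (∀ x : L2, PosVec x → PosVec (T x)) ∧ ‖T‖ ≤ 1}

/-- The strong operator topology (pointwise norm-convergence). -/
def sot : TopologicalSpace (L2 →L[ℂ] L2) :=
  TopologicalSpace.induced (fun T => (fun x : L2 => T x)) Pi.topologicalSpace

/-- The weak operator topology (pointwise weak convergence). -/
def wot : TopologicalSpace (L2 →L[ℂ] L2) :=
  TopologicalSpace.induced
    (fun T => (fun q : L2 × L2 => (inner ℂ q.1 (T q.2) : ℂ)))
    Pi.topologicalSpace

/-- The dual strong operator topology `SOT_*` (pointwise norm-convergence of the adjoints). -/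
def sotStar : TopologicalSpace (L2 →L[ℂ] L2) :=
  TopologicalSpace.induced
    (fun T => (fun x : L2 => (ContinuousLinearMap.adjoint T) x))
    Pi.topologicalSpace

/-- The `SOT*` topology, the join of `SOT` and `SOT_*`.  (In the order on
`TopologicalSpace`, `⊓` is the coarsest topology refining both.) -/
def sotSStar : TopologicalSpace (L2 →L[ℂ] L2) := sot ⊓ sotStar

/-- Restriction of a topology to a subset. -/
def rtop {α : Type*} (s : Set α) (t : TopologicalSpace α) : TopologicalSpace ↥s :=
  t.induced Subtype.val

/-- Two topologies on the same set are similar if they have the same dense sets. -/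
def SimilarTop {Y : Type*} (t t' : TopologicalSpace Y) : Prop :=
  ∀ A : Set Y, @Dense Y t A ↔ @Dense Y t' A

/-- The canonical basis vector `e_n` of `ℓ₂`. -/
def e (n : ℕ) : L2 := lp.single 2 n (1 : ℂ)

local notation "⟪" x ", " y "⟫" => @inner ℂ _ _ x y

lemma inner_e_left (n : ℕ) (x : L2) : ⟪e n, x⟫ = x n := by
  rw [e, lp.inner_single_left]
  simp [RCLike.inner_apply]

lemma norm_e (n : ℕ) : ‖e n‖ = 1 := by
  have h := lp.norm_single (p := 2) (E := fun _ : ℕ => ℂ) (by norm_num)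
    n (1 : ℂ)
  simpa [e] using h

lemma e_apply_self (n : ℕ) : (e n) n = 1 := lp.single_apply_self 2 n 1

/-- The perturbation operators. -/
def Aop (T : L2 →L[ℂ] L2) (l n : ℕ) : L2 →L[ℂ] L2 :=
  T.comp (ContinuousLinearMap.id ℂ L2 - (innerSL ℂ (e n)).smulRight (e n)) +
    (innerSL ℂ (e n)).smulRight (e l)

lemma Aop_apply (T : L2 →L[ℂ] L2) (l n : ℕ) (x : L2) :
    Aop T l n x = T (x - ⟪e n, x⟫ • e n) + ⟪e n, x⟫ • e l := by
  simp [Aop]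

lemma posVec_add {x y : L2} (hx : PosVec x) (hy : PosVec y) : PosVec (x + y) := by
  intro n
  have : (x + y) n = x n + y n := by rw [lp.coeFn_add]; rfl
  rw [this]
  exact ⟨by simpa using add_nonneg (hx n).1 (hy n).1,
    by simp [Complex.add_im, (hx n).2, (hy n).2]⟩

lemma posVec_smul_e {c : ℂ} (hc : 0 ≤ c.re ∧ c.im = 0) (l : ℕ) : PosVec (c • e l) := by
  intro m
  have : (c • e l) m = c * (e l) m := by rw [lp.coeFn_smul]; rfl
  rw [this]
  rcases eq_or_ne m l with rfl | hml
  · rw [e_apply_self, mul_one]; exact hc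
  · rw [e, lp.single_apply_ne 2 l _ hml, mul_zero]; simp

lemma posVec_Q {x : L2} (hx : PosVec x) (n : ℕ) : PosVec (x - x n • e n) := by
  intro m
  have : (x - x n • e n) m = x m - x n * (e n) m := by
    rw [lp.coeFn_sub]
    simp only [Pi.sub_apply]
    congr 1
  rw [this]
  rcases eq_or_ne m n with rfl | hmn
  · rw [e_apply_self, mul_one, sub_self]; simp
  · rw [e, lp.single_apply_ne 2 n _ hmn, mul_zero, sub_zero]; exact hx m

lemma row_zero {T : L2 →L[ℂ] L2} {l : ℕ}
    (hl : ContinuousLinearMap.adjoint T (e l) = 0) (y : L2) : ⟪e l, T y⟫ = 0 := by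
  rw [← ContinuousLinearMap.adjoint_inner_left, hl, inner_zero_left]

lemma Aop_mem {T : L2 →L[ℂ] L2} (hT : T ∈ P1) {l : ℕ}
    (hl : ContinuousLinearMap.adjoint T (e l) = 0) (n : ℕ) : Aop T l n ∈ P1 := by
  constructor
  · intro x hx
    rw [Aop_apply, inner_e_left]
    exact posVec_add (hT.1 _ (posVec_Q hx n)) (posVec_smul_e (hx n) l)
  · refine ContinuousLinearMap.opNorm_le_bound _ zero_le_one (fun x => ?_)
    set c : ℂ := ⟪e n, x⟫ with hc
    set Q : L2 := x - c • e n with hQdef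
    have hQn : Q n = 0 := by
      have : Q n = x n - c * (e n) n := by
        rw [hQdef, lp.coeFn_sub]
        simp only [Pi.sub_apply]
        congr 1
      rw [this, e_apply_self, mul_one, hc, inner_e_left, sub_self]
    have h1 : ⟪T Q, c • e l⟫ = 0 := by
      rw [inner_smul_right]
      have h0 : ⟪T Q, e l⟫ = 0 := by
        rw [← inner_conj_symm, row_zero hl, map_zero]
      rw [h0, mul_zero]
    have h2 : ⟪Q, c • e n⟫ = 0 := by
      rw [inner_smul_right]
      have h0 : ⟪Q, e n⟫ = 0 := by
        rw [← inner_conj_symm, inner_e_left, hQn, map_zero]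
      rw [h0, mul_zero]
    have hxdecomp : Q + c • e n = x := by rw [hQdef]; abel
    have hxsq : ‖x‖ * ‖x‖ = ‖Q‖ * ‖Q‖ + ‖c • e n‖ * ‖c • e n‖ := by
      rw [← hxdecomp]
      exact norm_add_sq_eq_norm_sq_add_norm_sq_of_inner_eq_zero Q (c • e n) h2
    have hAsq : ‖Aop T l n x‖ * ‖Aop T l n x‖ = ‖T Q‖ * ‖T Q‖ + ‖c • e l‖ * ‖c • e l‖ := by
      rw [Aop_apply, ← hc, ← hQdef]
      exact norm_add_sq_eq_norm_sq_add_norm_sq_of_inner_eq_zero (T Q) (c • e l) h1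
    have hTQ : ‖T Q‖ ≤ ‖Q‖ := by
      calc ‖T Q‖ ≤ ‖T‖ * ‖Q‖ := T.le_opNorm Q
        _ ≤ 1 * ‖Q‖ := mul_le_mul_of_nonneg_right hT.2 (norm_nonneg Q)
        _ = ‖Q‖ := one_mul _
    have hnn : ‖c • e l‖ = ‖c • e n‖ := by rw [norm_smul, norm_smul, norm_e, norm_e]
    rw [one_mul]
    nlinarith [norm_nonneg (Aop T l n x), norm_nonneg x, norm_nonneg (T Q), norm_nonneg Q,
      norm_nonneg (c • e n)]

lemma adjoint_Aop {T : L2 →L[ℂ] L2} {l : ℕ}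
    (hl : ContinuousLinearMap.adjoint T (e l) = 0) (n : ℕ) :
    ContinuousLinearMap.adjoint (Aop T l n) (e l) = e n := by
  refine ext_inner_right ℂ (fun v => ?_)
  rw [ContinuousLinearMap.adjoint_inner_left, Aop_apply, inner_add_right,
    row_zero hl, inner_smul_right, inner_e_left l (e l), e_apply_self, mul_one, zero_add,
    inner_e_left]

lemma coord_tendsto (x : L2) :
    Filter.Tendsto (fun n : ℕ => ‖x n‖) Filter.atTop (nhds 0) := by
  have hs : Summable (fun n : ℕ => ‖x n‖ ^ ((2 : ℝ≥0∞).toReal)) :=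
    (lp.memℓp x).summable (by norm_num)
  have hs2 : Summable (fun n : ℕ => ‖x n‖ ^ (2 : ℕ)) := by
    have h2 : (2 : ℝ≥0∞).toReal = (2 : ℝ) := by norm_num
    rw [h2] at hs
    simpa [Real.rpow_natCast] using hs
  have h0 : Filter.Tendsto (fun n : ℕ => ‖x n‖ ^ (2 : ℕ)) Filter.atTop (nhds 0) :=
    hs2.tendsto_atTop_zero
  have := (Real.continuous_sqrt.tendsto 0).comp h0
  simp only [Function.comp_def, Real.sqrt_zero] at this
  convert this using 2 with n
  rw [Real.sqrt_sq (norm_nonneg _)]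

lemma tendsto_nhds_induced_iff {α β ι : Type*} {f : α → β} {t : TopologicalSpace β}
    {l : Filter ι} {a : ι → α} {x : α} :
    Filter.Tendsto a l (@nhds α (t.induced f) x) ↔
      Filter.Tendsto (fun i => f (a i)) l (@nhds β t (f x)) := by
  rw [@nhds_induced β α t f x, Filter.tendsto_comap_iff]
  rfl

/-- Let `T ∈ 𝒫₁(ℓ₂)`.  If `T` is a point of continuity of the identity
map from `(𝒫₁(ℓ₂), SOT)` to `(𝒫₁(ℓ₂), SOT*)`, then `T* e_l ≠ 0` for every `l ≥ 0`,
where `T*` is the Hilbert-space adjoint of `T`. -/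
theorem continuity_point_sot_sotSStar_adjoint_nonzero_on_basis (T : ↥P1)
    (h : @ContinuousAt ↥P1 ↥P1 (rtop P1 sot) (rtop P1 sotSStar) id T) :
    ∀ l : ℕ, (ContinuousLinearMap.adjoint (T : L2 →L[ℂ] L2)) (e l) ≠ 0 := by
  intro l hl
  set a : ℕ → ↥P1 := fun n => ⟨Aop (T : L2 →L[ℂ] L2) l n, Aop_mem T.2 hl n⟩ with ha
  -- SOT convergence of A_n to T
  have key : ∀ x : L2, Filter.Tendsto (fun n => Aop (T : L2 →L[ℂ] L2) l n x)
      Filter.atTop (nhds ((T : L2 →L[ℂ] L2) x)) := by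
    intro x
    rw [← tendsto_sub_nhds_zero_iff]
    refine squeeze_zero_norm (a := fun n => 2 * ‖x n‖) (fun n => ?_) ?_
    ·
      have hdiff : Aop (T : L2 →L[ℂ] L2) l n x - (T : L2 →L[ℂ] L2) x =
          (⟪e n, x⟫ : ℂ) • e l - (T : L2 →L[ℂ] L2) ((⟪e n, x⟫ : ℂ) • e n) := by
        rw [Aop_apply, map_sub]
        abel
      rw [hdiff]
      calc ‖(⟪e n, x⟫ : ℂ) • e l - (T : L2 →L[ℂ] L2) ((⟪e n, x⟫ : ℂ) • e n)‖
          ≤ ‖(⟪e n, x⟫ : ℂ) • e l‖ + ‖(T : L2 →L[ℂ] L2) ((⟪e n, x⟫ : ℂ) • e n)‖ :=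
            norm_sub_le _ _
        _ ≤ ‖(⟪e n, x⟫ : ℂ)‖ * ‖e l‖ + ‖(T : L2 →L[ℂ] L2)‖ * ‖(⟪e n, x⟫ : ℂ) • e n‖ := by
            rw [norm_smul]
            exact add_le_add le_rfl (ContinuousLinearMap.le_opNorm _ _)
        _ ≤ ‖(⟪e n, x⟫ : ℂ)‖ * 1 + 1 * (‖(⟪e n, x⟫ : ℂ)‖ * 1) := by
            rw [norm_e, norm_smul, norm_e]
            have := T.2.2
            have h0 := norm_nonneg (⟪e n, x⟫ : ℂ)
            nlinarith
        _ = 2 * ‖(⟪e n, x⟫ : ℂ)‖ := by ring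
        _ = 2 * ‖x n‖ := by rw [inner_e_left]
    · have := (coord_tendsto x).const_mul (2 : ℝ)
      simpa using this
  have h1 : Filter.Tendsto a Filter.atTop (@nhds _ (rtop P1 sot) T) := by
    apply (tendsto_nhds_induced_iff (t := sot) (f := (Subtype.val : ↥P1 → _))).mpr
    apply (tendsto_nhds_induced_iff (t := Pi.topologicalSpace)
      (f := fun S : L2 →L[ℂ] L2 => (fun x : L2 => S x))).mpr
    rw [tendsto_pi_nhds]
    exact key
  have h' : Filter.Tendsto (id : ↥P1 → ↥P1) (@nhds _ (rtop P1 sot) T)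
      (@nhds _ (rtop P1 sotSStar) T) := h
  have h2 : Filter.Tendsto a Filter.atTop (@nhds _ (rtop P1 sotSStar) T) := h'.comp h1
  have h3 : Filter.Tendsto a Filter.atTop (@nhds _ (rtop P1 sotStar) T) :=
    h2.mono_right (nhds_mono (induced_mono inf_le_right))
  have h4 := (tendsto_nhds_induced_iff (t := Pi.topologicalSpace)
      (f := fun S : L2 →L[ℂ] L2 => (fun x : L2 => ContinuousLinearMap.adjoint S x))).mp
    ((tendsto_nhds_induced_iff (t := sotStar) (f := (Subtype.val : ↥P1 → _))).mp h3)
  rw [tendsto_pi_nhds] at h4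
  have h5 := h4 (e l)
  have h6 : Filter.Tendsto (fun n : ℕ => e n) Filter.atTop (nhds 0) := by
    have heq : ∀ n : ℕ, ContinuousLinearMap.adjoint ((a n : L2 →L[ℂ] L2)) (e l) = e n :=
      fun n => adjoint_Aop hl n
    simp only [heq, hl] at h5
    exact h5
  have h7 : Filter.Tendsto (fun _ : ℕ => (1 : ℝ)) Filter.atTop (nhds 0) := by
    simpa [norm_e] using h6.norm
  exact one_ne_zero (tendsto_nhds_unique tendsto_const_nhds h7)
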